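/- For every HXPath= node expression φ, abstract hybrid data model M with point m, and first-order assignment g with g(x)=m and g(x_i)=nom(i) for all nominals i, we have M,m ⊨ φ if and only if M,g ⊨ ST_x(φ), where ST_x is the standard translation of HXPath= into first-order logic. -/
import Mathlib


mutual
inductive PExp (P N M E : Type) : Type
  | mod : M → PExp P N M E
  | at_ : N → PExp P N M E
  | test : NExp P N M E → PExp P N M E
  | comp : PExp P N M E → PExp P N M E → PExp P N M E
inductive NExp (P N M E : Type) : Type
  | prop : P → NExp P N M E
  | nom : N → NExp P N M E
  | neg : NExp P N M E → NExp P N M E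
  | conj : NExp P N M E → NExp P N M E → NExp P N M E
  | cmpEq : E → PExp P N M E → PExp P N M E → NExp P N M E
  | cmpNeq : E → PExp P N M E → PExp P N M E → NExp P N M E
end

/-- An abstract hybrid data model (the requirement that each `sim e` is an
equivalence relation is stated as a separate hypothesis where needed). -/
structure Model (P N M E : Type) where
  W : Type
  sim : E → W → W → Prop
  R : M → W → W → Prop
  V : W → P → Prop
  nom : N → W

mutual
def psat {P N M E : Type} (𝔐 : Model P N M E) : PExp P N M E → 𝔐.W → 𝔐.W → Prop
  | .mod a, m, n => 𝔐.R a m n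
  | .at_ i, _, n => 𝔐.nom i = n
  | .test φ, m, n => m = n ∧ nsat 𝔐 φ m
  | .comp α β, m, n => ∃ l, psat 𝔐 α m l ∧ psat 𝔐 β l n
def nsat {P N M E : Type} (𝔐 : Model P N M E) : NExp P N M E → 𝔐.W → Prop
  | .prop p, m => 𝔐.V m p
  | .nom i, m => 𝔐.nom i = m
  | .neg φ, m => ¬ nsat 𝔐 φ m
  | .conj φ ψ, m => nsat 𝔐 φ m ∧ nsat 𝔐 ψ m
  | .cmpEq e α β, m => ∃ n l, psat 𝔐 α m n ∧ psat 𝔐 β m l ∧ 𝔐.sim e n l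
  | .cmpNeq e α β, m => ∃ n l, psat 𝔐 α m n ∧ psat 𝔐 β m l ∧ ¬ 𝔐.sim e n l
end

variable {P N M E : Type}

/-- `⊤` defined from a given node expression: `¬(φ ∧ ¬φ)`. -/
def NExp.top (φ : NExp P N M E) : NExp P N M E := .neg (.conj φ (.neg φ))
/-- `ε := [⊤]`. -/
def PExp.eps (φ : NExp P N M E) : PExp P N M E := .test (NExp.top φ)
/-- `⟨α⟩φ := ⟨α[φ] =_e α[φ]⟩`. -/
def NExp.dia (e : E) (α : PExp P N M E) (φ : NExp P N M E) : NExp P N M E :=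
  .cmpEq e (α.comp (.test φ)) (α.comp (.test φ))
/-- `[α]φ := ¬⟨α⟩¬φ`. -/
def NExp.box (e : E) (α : PExp P N M E) (φ : NExp P N M E) : NExp P N M E :=
  .neg (NExp.dia e α (.neg φ))
/-- `@_i φ := ⟨@_i⟩φ`. -/
def NExp.atf (e : E) (i : N) (φ : NExp P N M E) : NExp P N M E := NExp.dia e (.at_ i) φ
def NExp.impl (φ ψ : NExp P N M E) : NExp P N M E := .neg (.conj φ (.neg ψ))
def NExp.iffN (φ ψ : NExp P N M E) : NExp P N M E := .conj (φ.impl ψ) (ψ.impl φ)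

/-- First-order correspondence language: a unary predicate for each proposition
symbol, a binary relation for each modality and each equality symbol, over a type
`V` of variables. -/
inductive FO (P M E V : Type) : Type
  | veq : V → V → FO P M E V
  | pred : P → V → FO P M E V
  | rel : M → V → V → FO P M E V
  | data : E → V → V → FO P M E V
  | not : FO P M E V → FO P M E V
  | and : FO P M E V → FO P M E V → FO P M E V
  | ex : V → FO P M E V → FO P M E V

variable {V : Type}

def FO.Sat (W : Type) (RI : M → W → W → Prop) (PI : W → P → Prop)
    (DI : E → W → W → Prop) [DecidableEq V] : FO P M E V → (V → W) → Prop
  | .veq x y, g => g x = g y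
  | .pred p x, g => PI (g x) p
  | .rel a x y, g => RI a (g x) (g y)
  | .data e x y, g => DI e (g x) (g y)
  | .not φ, g => ¬ FO.Sat W RI PI DI φ g
  | .and φ ψ, g => FO.Sat W RI PI DI φ g ∧ FO.Sat W RI PI DI ψ g
  | .ex v φ, g => ∃ w : W, FO.Sat W RI PI DI φ (Function.update g v w)

def FO.imp (φ ψ : FO P M E V) : FO P M E V := .not (.and φ (.not ψ))
def FO.all (v : V) (φ : FO P M E V) : FO P M E V := .not (.ex v (.not φ))

/-- Variables: a variable `x_i` for each nominal `i` (left), plus countably many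
node variables (right). -/
abbrev Var (N : Type) := N ⊕ ℕ

mutual
/-- Standard translation of path expressions: `stP α x y c` is `ST'_{x,y}(α)`,
using node variables `≥ c` as fresh variables. -/
def stP {P N M E : Type} : PExp P N M E → ℕ → ℕ → ℕ → FO P M E (Var N)
  | .mod a, x, y, _ => .rel a (.inr x) (.inr y)
  | .at_ i, _, y, _ => .veq (.inr y) (.inl i)
  | .test φ, x, y, c => .and (.veq (.inr x) (.inr y)) (stN φ y c)
  | .comp α β, x, y, c => .ex (.inr c) (.and (stP α x c (c + 1)) (stP β c y (c + 1)))
/-- Standard translation of node expressions: `stN φ x c` is `ST'_x(φ)`,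
using node variables `≥ c` as fresh variables. -/
def stN {P N M E : Type} : NExp P N M E → ℕ → ℕ → FO P M E (Var N)
  | .nom i, x, _ => .veq (.inr x) (.inl i)
  | .prop p, x, _ => .pred p (.inr x)
  | .neg φ, x, c => .not (stN φ x c)
  | .conj φ ψ, x, c => .and (stN φ x c) (stN ψ x c)
  | .cmpEq e α β, x, c =>
      .ex (.inr c) (.ex (.inr (c + 1))
        (.and (stP α x c (c + 2)) (.and (stP β x (c + 1) (c + 2))
          (.data e (.inr c) (.inr (c + 1))))))
  | .cmpNeq e α β, x, c =>
      .ex (.inr c) (.ex (.inr (c + 1))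
        (.and (stP α x c (c + 2)) (.and (stP β x (c + 1) (c + 2))
          (.not (.data e (.inr c) (.inr (c + 1)))))))
end

/-- `Eq(e)` : the first-order statement that `D_e` is an equivalence relation. -/
def eqAx (e : E) : FO P M E (Var N) :=
  .and (.all (.inr 0) (.data e (.inr 0) (.inr 0)))
    (.and (.all (.inr 0) (.all (.inr 1)
            (FO.imp (.data e (.inr 0) (.inr 1)) (.data e (.inr 1) (.inr 0)))))
      (.all (.inr 0) (.all (.inr 1) (.all (.inr 2)
        (FO.imp (.and (.data e (.inr 0) (.inr 1)) (.data e (.inr 1) (.inr 2)))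
          (.data e (.inr 0) (.inr 2)))))))

mutual
/-- Equality symbols appearing in a path expression. -/
def peqs {P N M E : Type} : PExp P N M E → List E
  | .mod _ => []
  | .at_ _ => []
  | .test φ => neqs φ
  | .comp α β => peqs α ++ peqs β
/-- Equality symbols appearing in a node expression. -/
def neqs {P N M E : Type} : NExp P N M E → List E
  | .prop _ => []
  | .nom _ => []
  | .neg φ => neqs φ
  | .conj φ ψ => neqs φ ++ neqs ψ
  | .cmpEq e α β => e :: (peqs α ++ peqs β)
  | .cmpNeq e α β => e :: (peqs α ++ peqs β)
end

/-- The standard translation `ST_x(φ)`: the conjunction of `Eq(e)` for every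
equality symbol occurring in `φ`, together with `ST'_x(φ)`. -/
def stdTr (φ : NExp P N M E) (x c : ℕ) : FO P M E (Var N) :=
  (neqs φ).foldr (fun e ψ => .and (eqAx e) ψ) (stN φ x c)

section Aux

variable [DecidableEq N] (𝔐 : Model P N M E)

lemma upd_inl (g : Var N → 𝔐.W) (c : ℕ) (w : 𝔐.W) (i : N) :
    Function.update g (Sum.inr c) w (Sum.inl i) = g (Sum.inl i) := by
  simp [Function.update]

lemma upd_inr (g : Var N → 𝔐.W) (c x : ℕ) (w : 𝔐.W) (h : x ≠ c) :
    Function.update g (Sum.inr c) w (Sum.inr x) = g (Sum.inr x) := by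
  simp [Function.update, h]

lemma eqAx_sat (e : E) (he : Equivalence (𝔐.sim e)) (g : Var N → 𝔐.W) :
    FO.Sat 𝔐.W 𝔐.R 𝔐.V 𝔐.sim (eqAx (N := N) e) g := by
  simp only [eqAx, FO.all, FO.imp, FO.Sat, not_exists, not_and, not_not]
  simp only [Function.update]
  refine ⟨fun w => ?_, fun w1 w2 => ?_, fun w1 w2 w3 => ?_⟩ <;> simp <;>
    first
      | exact he.refl w
      | exact fun h => he.symm h
      | exact fun h1 h2 => he.trans h1 h2

mutual
theorem stP_correct (α : PExp P N M E) (x y c : ℕ) (hx : x < c) (hy : y < c)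
    (g : Var N → 𝔐.W) (hgi : ∀ i : N, g (.inl i) = 𝔐.nom i) :
    psat 𝔐 α (g (.inr x)) (g (.inr y)) ↔
      FO.Sat 𝔐.W 𝔐.R 𝔐.V 𝔐.sim (stP α x y c) g := by
  cases α with
  | mod a => simp [psat, stP, FO.Sat]
  | at_ i => simp [psat, stP, FO.Sat, hgi, eq_comm]
  | test φ =>
      simp only [psat, stP, FO.Sat]
      constructor
      · rintro ⟨h1, h2⟩
        exact ⟨h1, (stN_correct φ y c hy g hgi).1 (h1 ▸ h2)⟩
      · rintro ⟨h1, h2⟩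
        exact ⟨h1, h1 ▸ (stN_correct φ y c hy g hgi).2 h2⟩
  | comp α β =>
      simp only [psat, stP, FO.Sat]
      constructor
      · rintro ⟨l, h1, h2⟩
        refine ⟨l, ?_, ?_⟩
        · have := (stP_correct α x c (c + 1) (by omega) (by omega)
            (Function.update g (Sum.inr c) l)
            (fun i => by rw [upd_inl]; exact hgi i)).1
          rw [upd_inr (h := by omega), Function.update_self] at this
          exact this h1
        · have := (stP_correct β c y (c + 1) (by omega) (by omega)
            (Function.update g (Sum.inr c) l)
            (fun i => by rw [upd_inl]; exact hgi i)).1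
          rw [Function.update_self, upd_inr (x := y) (h := by omega)] at this
          exact this h2
      · rintro ⟨l, h1, h2⟩
        refine ⟨l, ?_, ?_⟩
        · have := (stP_correct α x c (c + 1) (by omega) (by omega)
            (Function.update g (Sum.inr c) l)
            (fun i => by rw [upd_inl]; exact hgi i)).2 h1
          rwa [upd_inr (h := by omega), Function.update_self] at this
        · have := (stP_correct β c y (c + 1) (by omega) (by omega)
            (Function.update g (Sum.inr c) l)
            (fun i => by rw [upd_inl]; exact hgi i)).2 h2
          rwa [Function.update_self, upd_inr (x := y) (h := by omega)] at this

theorem stN_correct (φ : NExp P N M E) (x c : ℕ) (hx : x < c)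
    (g : Var N → 𝔐.W) (hgi : ∀ i : N, g (.inl i) = 𝔐.nom i) :
    nsat 𝔐 φ (g (.inr x)) ↔
      FO.Sat 𝔐.W 𝔐.R 𝔐.V 𝔐.sim (stN φ x c) g := by
  cases φ with
  | prop p => simp [nsat, stN, FO.Sat]
  | nom i => simp [nsat, stN, FO.Sat, hgi, eq_comm]
  | neg φ =>
      simp only [nsat, stN, FO.Sat]
      exact not_congr (stN_correct φ x c hx g hgi)
  | conj φ ψ =>
      simp only [nsat, stN, FO.Sat]
      exact and_congr (stN_correct φ x c hx g hgi) (stN_correct ψ x c hx g hgi)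
  | cmpEq e α β =>
      simp only [nsat, stN, FO.Sat]
      constructor
      · rintro ⟨n, l, h1, h2, h3⟩
        refine ⟨n, l, ?_⟩
        set g' := Function.update (Function.update g (Sum.inr c) n) (Sum.inr (c + 1)) l with hg'
        have hgi' : ∀ i : N, g' (.inl i) = 𝔐.nom i := fun i => by
          rw [hg', upd_inl, upd_inl]; exact hgi i
        have hx' : g' (Sum.inr x) = g (Sum.inr x) := by
          rw [hg', upd_inr (h := by omega), upd_inr (h := by omega)]
        have hc' : g' (Sum.inr c) = n := by
          rw [hg', upd_inr (h := by omega), Function.update_self]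
        have hc1' : g' (Sum.inr (c + 1)) = l := by rw [hg', Function.update_self]
        refine ⟨?_, ?_, ?_⟩
        · have := (stP_correct α x c (c + 2) (by omega) (by omega) g' hgi').1
          rw [hx', hc'] at this; exact this h1
        · have := (stP_correct β x (c + 1) (c + 2) (by omega) (by omega) g' hgi').1
          rw [hx', hc1'] at this; exact this h2
        · rwa [hc', hc1']
      · rintro ⟨n, l, h1, h2, h3⟩
        set g' := Function.update (Function.update g (Sum.inr c) n) (Sum.inr (c + 1)) l with hg'
        have hgi' : ∀ i : N, g' (.inl i) = 𝔐.nom i := fun i => by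
          rw [hg', upd_inl, upd_inl]; exact hgi i
        have hx' : g' (Sum.inr x) = g (Sum.inr x) := by
          rw [hg', upd_inr (h := by omega), upd_inr (h := by omega)]
        have hc' : g' (Sum.inr c) = n := by
          rw [hg', upd_inr (h := by omega), Function.update_self]
        have hc1' : g' (Sum.inr (c + 1)) = l := by rw [hg', Function.update_self]
        refine ⟨n, l, ?_, ?_, ?_⟩
        · have := (stP_correct α x c (c + 2) (by omega) (by omega) g' hgi').2 h1
          rwa [hx', hc'] at this
        · have := (stP_correct β x (c + 1) (c + 2) (by omega) (by omega) g' hgi').2 h2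
          rwa [hx', hc1'] at this
        · rwa [hc', hc1'] at h3
  | cmpNeq e α β =>
      simp only [nsat, stN, FO.Sat]
      constructor
      · rintro ⟨n, l, h1, h2, h3⟩
        refine ⟨n, l, ?_⟩
        set g' := Function.update (Function.update g (Sum.inr c) n) (Sum.inr (c + 1)) l with hg'
        have hgi' : ∀ i : N, g' (.inl i) = 𝔐.nom i := fun i => by
          rw [hg', upd_inl, upd_inl]; exact hgi i
        have hx' : g' (Sum.inr x) = g (Sum.inr x) := by
          rw [hg', upd_inr (h := by omega), upd_inr (h := by omega)]
        have hc' : g' (Sum.inr c) = n := by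
          rw [hg', upd_inr (h := by omega), Function.update_self]
        have hc1' : g' (Sum.inr (c + 1)) = l := by rw [hg', Function.update_self]
        refine ⟨?_, ?_, ?_⟩
        · have := (stP_correct α x c (c + 2) (by omega) (by omega) g' hgi').1
          rw [hx', hc'] at this; exact this h1
        · have := (stP_correct β x (c + 1) (c + 2) (by omega) (by omega) g' hgi').1
          rw [hx', hc1'] at this; exact this h2
        · rwa [hc', hc1']
      · rintro ⟨n, l, h1, h2, h3⟩
        set g' := Function.update (Function.update g (Sum.inr c) n) (Sum.inr (c + 1)) l with hg'
        have hgi' : ∀ i : N, g' (.inl i) = 𝔐.nom i := fun i => by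
          rw [hg', upd_inl, upd_inl]; exact hgi i
        have hx' : g' (Sum.inr x) = g (Sum.inr x) := by
          rw [hg', upd_inr (h := by omega), upd_inr (h := by omega)]
        have hc' : g' (Sum.inr c) = n := by
          rw [hg', upd_inr (h := by omega), Function.update_self]
        have hc1' : g' (Sum.inr (c + 1)) = l := by rw [hg', Function.update_self]
        refine ⟨n, l, ?_, ?_, ?_⟩
        · have := (stP_correct α x c (c + 2) (by omega) (by omega) g' hgi').2 h1
          rwa [hx', hc'] at this
        · have := (stP_correct β x (c + 1) (c + 2) (by omega) (by omega) g' hgi').2 h2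
          rwa [hx', hc1'] at this
        · rwa [hc', hc1'] at h3
end

lemma foldr_eqAx_sat (L : List E) (hsim : ∀ e, Equivalence (𝔐.sim e))
    (ψ : FO P M E (Var N)) (g : Var N → 𝔐.W) :
    FO.Sat 𝔐.W 𝔐.R 𝔐.V 𝔐.sim (L.foldr (fun e χ => .and (eqAx e) χ) ψ) g ↔
      FO.Sat 𝔐.W 𝔐.R 𝔐.V 𝔐.sim ψ g := by
  induction L with
  | nil => rfl
  | cons e L ih =>
      simp only [List.foldr, FO.Sat, ih]
      exact ⟨fun h => h.2, fun h => ⟨eqAx_sat 𝔐 e (hsim e) g, h⟩⟩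

end Aux

/-- The standard translation is truth preserving: for an abstract hybrid data
model `𝔐` (so each `∼_e` is an equivalence relation), a point `m` and an
assignment `g` with `g(x) = m` and `g(x_i) = nom(i)` for every nominal `i`,
`𝔐,m ⊨ φ` iff `𝔐,g ⊨ ST_x(φ)`. -/
theorem standard_translation_correct [DecidableEq N]
    (𝔐 : Model P N M E) (hsim : ∀ e, Equivalence (𝔐.sim e))
    (φ : NExp P N M E) (m : 𝔐.W) (x c : ℕ) (hxc : x < c)
    (g : Var N → 𝔐.W) (hgx : g (.inr x) = m) (hgi : ∀ i : N, g (.inl i) = 𝔐.nom i) :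
    nsat 𝔐 φ m ↔ FO.Sat 𝔐.W 𝔐.R 𝔐.V 𝔐.sim (stdTr φ x c) g := by
  rw [stdTr, foldr_eqAx_sat 𝔐 _ hsim]
  rw [← hgx]
  exact stN_correct 𝔐 φ x c hxc g hgi
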